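/- Let A and B be positive semidefinite operators on a finite-dimensional Hilbert space with ker A ∩ ker B = {0}. Then the smallest eigenvalue of A + B is at least min(λ₁(A), λ₁(B)) · sin²(θ/2), where λ₁ denotes the smallest nonzero eigenvalue and cos θ = max{|⟨u|v⟩| : u ∈ ker A, v ∈ ker B, ‖u‖ = ‖v‖ = 1} (with θ ∈ (0, π/2]). -/

import Mathlib

open Matrix Real Finset ComplexOrder

local notation "⟪" x ", " y "⟫" => inner (𝕜 := ℂ) x y

lemma inner_piLp_equiv_symm' {n : ℕ} (x y : Fin n → ℂ) :
    ⟪(WithLp.equiv 2 (Fin n → ℂ)).symm x, (WithLp.equiv 2 (Fin n → ℂ)).symm y⟫ = star x ⬝ᵥ y :=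
  dotProduct_comm y (star x)

lemma dstar {n : ℕ} (v : Fin n → ℂ) :
    star v ⬝ᵥ v = ((‖(WithLp.equiv 2 (Fin n → ℂ)).symm v‖ ^ 2 : ℝ) : ℂ) := by
  rw [← inner_piLp_equiv_symm', inner_self_eq_norm_sq_to_K]; norm_cast

lemma key {n : ℕ} {A : Matrix (Fin n) (Fin n) ℂ} (hA : A.PosSemidef) {lam : ℝ}
    (hlam : IsLeast {μ : ℝ | μ ≠ 0 ∧ ∃ v : Fin n → ℂ, v ≠ 0 ∧ A.mulVec v = (μ : ℂ) • v} lam)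
    (w : EuclideanSpace ℂ (Fin n)) :
    ∃ a : EuclideanSpace ℂ (Fin n),
      A.mulVec ((WithLp.equiv 2 (Fin n → ℂ)) a) = 0 ∧
      ⟪a, w - a⟫ = 0 ∧
      lam * ‖w - a‖ ^ 2 ≤
        ((star ((WithLp.equiv 2 (Fin n → ℂ)) w) ⬝ᵥ
          A.mulVec ((WithLp.equiv 2 (Fin n → ℂ)) w)).re) := by
  classical
  set b := hA.1.eigenvectorBasis with hb
  set e := hA.1.eigenvalues with he
  set c : Fin n → ℂ := fun i => b.repr w i with hc
  set f : EuclideanSpace ℂ (Fin n) :=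
    (WithLp.equiv 2 (Fin n → ℂ)).symm (fun i => if e i = 0 then c i else 0) with hf
  set a := b.repr.symm f with ha
  have hfi : ∀ i, f i = if e i = 0 then c i else 0 := fun i => rfl
  have hra : b.repr a = f := b.repr.apply_symm_apply f
  have hsum : a = ∑ i, f i • b i := by
    rw [ha, ← b.sum_repr_symm]
  -- A *ᵥ a = 0
  have hker : A.mulVec ((WithLp.equiv 2 (Fin n → ℂ)) a) = 0 := by
    have : (Matrix.toEuclideanLin A) a = 0 := by
      rw [hsum, map_sum]
      refine Finset.sum_eq_zero fun i _ => ?_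
      rw [LinearMap.map_smul]
      have hmv := hA.1.mulVec_eigenvectorBasis i
      rw [← hb, ← he] at hmv
      rcases eq_or_ne (e i) 0 with h0 | h0
      · have hz : (Matrix.toEuclideanLin A) (b i) = 0 := by
          rw [Matrix.toEuclideanLin_apply]
          rw [h0] at hmv
          simp only [zero_smul] at hmv
          simp [hmv]
        rw [hz, smul_zero]
      · rw [hfi, if_neg h0, zero_smul]
    have := congrArg (WithLp.equiv 2 (Fin n → ℂ)) this
    rw [Matrix.toEuclideanLin_apply] at this
    simpa using this
  have hmv : ∀ i, (Matrix.toEuclideanLin A) (b i) = (e i : ℂ) • b i := by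
    intro i
    rw [Matrix.toEuclideanLin_apply]
    have h := hA.1.mulVec_eigenvectorBasis i
    rw [← hb, ← he] at h
    rw [h]
    apply (WithLp.equiv 2 (Fin n → ℂ)).symm_apply_eq.2
    ext j
    simp [Complex.real_smul]
  refine ⟨a, hker, ?_, ?_⟩
  · have h1 : ⟪a, w - a⟫ = ⟪b.repr a, b.repr (w - a)⟫ :=
      (b.repr.inner_map_map a (w - a)).symm
    rw [h1, hra, map_sub, hra, PiLp.inner_apply]
    refine Finset.sum_eq_zero fun i _ => ?_
    rcases eq_or_ne (e i) 0 with h0 | h0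
    · simp [hfi, h0, PiLp.sub_apply, RCLike.inner_apply, hc]
    · simp [hfi, h0, PiLp.sub_apply, RCLike.inner_apply]
  · have hRHS : star ((WithLp.equiv 2 (Fin n → ℂ)) w) ⬝ᵥ
        A.mulVec ((WithLp.equiv 2 (Fin n → ℂ)) w) = ⟪w, (Matrix.toEuclideanLin A) w⟫ := by
      rw [Matrix.toEuclideanLin_apply, ← inner_piLp_equiv_symm',
        (WithLp.equiv 2 (Fin n → ℂ)).symm_apply_apply]
      rfl
    have hTw : ∀ i, b.repr ((Matrix.toEuclideanLin A) w) i = (e i : ℂ) * c i := by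
      intro i
      rw [OrthonormalBasis.repr_apply_apply,
        ← (Matrix.isHermitian_iff_isSymmetric.1 hA.1) (b i) w, hmv i, inner_smul_left]
      simp [hc, OrthonormalBasis.repr_apply_apply]
    have hIP : (⟪w, (Matrix.toEuclideanLin A) w⟫).re = ∑ i, e i * Complex.normSq (c i) := by
      rw [← b.repr.inner_map_map w ((Matrix.toEuclideanLin A) w), PiLp.inner_apply]
      rw [Complex.re_sum]
      refine Finset.sum_congr rfl fun i _ => ?_
      rw [RCLike.inner_apply, hTw i]
      have : (starRingEnd ℂ) (b.repr w i) * ((e i : ℂ) * c i)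
          = (e i : ℂ) * ((Complex.normSq (c i) : ℝ) : ℂ) := by
        rw [mul_left_comm, ← Complex.normSq_eq_conj_mul_self]
      rw [mul_comm _ ((starRingEnd ℂ) _), this]
      simp
    have hnorm : ‖w - a‖ ^ 2 = ∑ i, if e i = 0 then 0 else Complex.normSq (c i) := by
      have h2 : (‖w - a‖ : ℝ) ^ 2 = (⟪w - a, w - a⟫).re := by
        rw [inner_self_eq_norm_sq_to_K]; norm_cast
      rw [h2, ← b.repr.inner_map_map (w - a) (w - a), map_sub, hra, PiLp.inner_apply,
        Complex.re_sum]
      refine Finset.sum_congr rfl fun i _ => ?_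
      rcases eq_or_ne (e i) 0 with h0 | h0
      · simp [RCLike.inner_apply, PiLp.sub_apply, hfi, h0, hc]
      · rw [if_neg h0]
        have hd : (b.repr w - f) i = c i := by simp [PiLp.sub_apply, hfi, h0, hc]
        rw [RCLike.inner_apply, hd, Complex.mul_conj]
        simp
    rw [hRHS, hIP, hnorm, Finset.mul_sum]
    refine Finset.sum_le_sum fun i _ => ?_
    rcases eq_or_ne (e i) 0 with h0 | h0
    · simp [h0]
    · rw [if_neg h0]
      have hmem : e i ∈ {μ : ℝ | μ ≠ 0 ∧ ∃ v : Fin n → ℂ, v ≠ 0 ∧ A.mulVec v = (μ : ℂ) • v} := by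
        refine ⟨h0, (WithLp.equiv 2 (Fin n → ℂ)) (b i), ?_, ?_⟩
        · intro hz
          have : b i = 0 := by
            apply (WithLp.equiv 2 (Fin n → ℂ)).injective
            simpa using hz
          exact b.orthonormal.ne_zero i this
        · have h := hmv i
          rw [Matrix.toEuclideanLin_apply] at h
          have := congrArg (WithLp.equiv 2 (Fin n → ℂ)) h
          exact this
      exact mul_le_mul_of_nonneg_right (hlam.2 hmem) (Complex.normSq_nonneg _)

lemma eig_pos {n : ℕ} {A : Matrix (Fin n) (Fin n) ℂ} (hA : A.PosSemidef) {lam : ℝ}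
    (hlam : IsLeast {μ : ℝ | μ ≠ 0 ∧ ∃ v : Fin n → ℂ, v ≠ 0 ∧ A.mulVec v = (μ : ℂ) • v} lam) :
    0 < lam := by
  obtain ⟨⟨hne, v, hv0, hv⟩, _⟩ := hlam
  have hpos := hA.dotProduct_mulVec_nonneg v
  rw [hv, dotProduct_smul, smul_eq_mul, dstar] at hpos
  set r := ‖(WithLp.equiv 2 (Fin n → ℂ)).symm v‖ with hr
  have hrpos : 0 < r := by
    rw [hr]
    refine norm_pos_iff.2 fun h => hv0 ?_
    have := congrArg (WithLp.equiv 2 (Fin n → ℂ)) h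
    simpa using this
  have : ((0 : ℝ) : ℂ) ≤ ((lam * r ^ 2 : ℝ) : ℂ) := by push_cast; simpa using hpos
  have h0 : (0 : ℝ) ≤ lam * r ^ 2 := by exact_mod_cast this
  rcases hne.lt_or_gt with h | h
  · exact absurd h0 (not_le.2 (mul_neg_of_neg_of_pos h (pow_pos hrpos 2)))
  · exact h


/-- Kitaev's geometric lemma: for positive semidefinite operators `A`, `B` on a
finite-dimensional Hilbert space whose kernels intersect trivially, the smallest
eigenvalue of `A + B` is at least `min(λ₁(A), λ₁(B)) · sin²(θ/2)`, where
`λ₁` denotes the smallest nonzero eigenvalue and `cos θ` is the maximal overlap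
between unit vectors of the two kernels, with `θ ∈ (0, π/2]`. -/
theorem stmt_17 {n : ℕ} (A B : Matrix (Fin n) (Fin n) ℂ)
    (hA : A.PosSemidef) (hB : B.PosSemidef)
    (hkerA : ∃ u : Fin n → ℂ, u ≠ 0 ∧ A.mulVec u = 0)
    (hkerB : ∃ v : Fin n → ℂ, v ≠ 0 ∧ B.mulVec v = 0)
    (hker : ∀ v : Fin n → ℂ, A.mulVec v = 0 → B.mulVec v = 0 → v = 0)
    (lamA lamB : ℝ)
    (hlamA : IsLeast {μ : ℝ | μ ≠ 0 ∧ ∃ v : Fin n → ℂ, v ≠ 0 ∧ A.mulVec v = (μ : ℂ) • v} lamA)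
    (hlamB : IsLeast {μ : ℝ | μ ≠ 0 ∧ ∃ v : Fin n → ℂ, v ≠ 0 ∧ B.mulVec v = (μ : ℂ) • v} lamB)
    (θ : ℝ) (hθ0 : 0 < θ) (hθ1 : θ ≤ π / 2)
    (hcos : IsGreatest {r : ℝ | ∃ u v : Fin n → ℂ,
        A.mulVec u = 0 ∧ B.mulVec v = 0 ∧
        star u ⬝ᵥ u = 1 ∧ star v ⬝ᵥ v = 1 ∧
        r = ‖star u ⬝ᵥ v‖} (Real.cos θ)) :
    ∀ (μ : ℝ) (w : Fin n → ℂ), w ≠ 0 → (A + B).mulVec w = (μ : ℂ) • w →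
      min lamA lamB * Real.sin (θ / 2) ^ 2 ≤ μ := by
  intro μ w0 hw0 heig
  classical
  set w : EuclideanSpace ℂ (Fin n) := (WithLp.equiv 2 (Fin n → ℂ)).symm w0 with hw
  obtain ⟨a, haA, haO, haI⟩ := key hA hlamA w
  obtain ⟨b, hbB, hbO, hbI⟩ := key hB hlamB w
  have hequiv_w : (WithLp.equiv 2 (Fin n → ℂ)) w = w0 := by
    rw [hw]; exact (WithLp.equiv 2 (Fin n → ℂ)).apply_symm_apply w0
  rw [hequiv_w] at haI hbI
  set ν := ‖w‖ ^ 2 with hν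
  have hwne : w ≠ 0 := by
    intro h
    apply hw0
    have := congrArg (WithLp.equiv 2 (Fin n → ℂ)) h
    rw [hequiv_w] at this
    simpa using this
  have hν0 : (0 : ℝ) < ν := pow_pos (norm_pos_iff.2 hwne) 2
  -- cos θ nonneg
  have hc0 : 0 ≤ Real.cos θ :=
    Real.cos_nonneg_of_mem_Icc ⟨by linarith [Real.pi_pos], hθ1⟩
  -- eigen identity
  have hkey : lamA * ‖w - a‖ ^ 2 + lamB * ‖w - b‖ ^ 2 ≤ μ * ν := by
    have h1 : star w0 ⬝ᵥ ((A + B).mulVec w0) = (μ : ℂ) * (star w0 ⬝ᵥ w0) := by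
      rw [heig, dotProduct_smul, smul_eq_mul]
    rw [Matrix.add_mulVec, dotProduct_add] at h1
    have h2 : star w0 ⬝ᵥ w0 = ((ν : ℝ) : ℂ) := by rw [dstar, hν, hw]
    have h3 := congrArg Complex.re h1
    rw [h2, Complex.add_re] at h3
    have h4 : ((μ : ℂ) * ((ν : ℝ) : ℂ)).re = μ * ν := by
      rw [← Complex.ofReal_mul, Complex.ofReal_re]
    rw [h4] at h3
    rw [← h3]
    exact add_le_add haI hbI
  set p := ‖a‖ with hp
  set q := ‖b‖ with hq
  -- Pythagoras
  have hPa : ν = p ^ 2 + ‖w - a‖ ^ 2 := by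
    have hsplit : w = a + (w - a) := by abel
    rw [hν]
    conv_lhs => rw [hsplit]
    rw [norm_add_sq (𝕜 := ℂ), haO]
    simp [hp]
  have hPb : ν = q ^ 2 + ‖w - b‖ ^ 2 := by
    have hsplit : w = b + (w - b) := by abel
    rw [hν]
    conv_lhs => rw [hsplit]
    rw [norm_add_sq (𝕜 := ℂ), hbO]
    simp [hq]
  -- inner products with w
  have hwa : (inner (𝕜 := ℂ) w a).re = p ^ 2 := by
    have h5 : inner (𝕜 := ℂ) a w = ((p ^ 2 : ℝ) : ℂ) := by
      conv_lhs => rw [show w = a + (w - a) by abel]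
      rw [inner_add_right, haO, add_zero, inner_self_eq_norm_sq_to_K]
      norm_cast
    rw [← inner_conj_symm, h5]
    simp [← Complex.ofReal_pow]
  have hwb : (inner (𝕜 := ℂ) w b).re = q ^ 2 := by
    have h5 : inner (𝕜 := ℂ) b w = ((q ^ 2 : ℝ) : ℂ) := by
      conv_lhs => rw [show w = b + (w - b) by abel]
      rw [inner_add_right, hbO, add_zero, inner_self_eq_norm_sq_to_K]
      norm_cast
    rw [← inner_conj_symm, h5]
    simp [← Complex.ofReal_pow]
  -- overlap bound
  have hab : ‖inner (𝕜 := ℂ) a b‖ ≤ Real.cos θ * (p * q) := by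
    rcases eq_or_ne p 0 with hp0 | hp0
    · have ha0 : a = 0 := norm_eq_zero.1 (hp ▸ hp0)
      simp [ha0, hp0]
    rcases eq_or_ne q 0 with hq0 | hq0
    · have hb0 : b = 0 := norm_eq_zero.1 (hq ▸ hq0)
      simp [hb0, hq0]
    have hppos : 0 < p := (hp ▸ norm_nonneg a).lt_of_ne' hp0
    have hqpos : 0 < q := (hq ▸ norm_nonneg b).lt_of_ne' hq0
    set u : Fin n → ℂ := (p⁻¹ : ℂ) • (WithLp.equiv 2 (Fin n → ℂ)) a with hu
    set v : Fin n → ℂ := (q⁻¹ : ℂ) • (WithLp.equiv 2 (Fin n → ℂ)) b with hv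
    have hdota : star ((WithLp.equiv 2 (Fin n → ℂ)) a) ⬝ᵥ ((WithLp.equiv 2 (Fin n → ℂ)) a)
        = ((p ^ 2 : ℝ) : ℂ) := by
      rw [dstar]
      simp [hp]
    have hdotb : star ((WithLp.equiv 2 (Fin n → ℂ)) b) ⬝ᵥ ((WithLp.equiv 2 (Fin n → ℂ)) b)
        = ((q ^ 2 : ℝ) : ℂ) := by
      rw [dstar]
      simp [hq]
    have hmemu : A.mulVec u = 0 := by rw [hu, Matrix.mulVec_smul, haA, smul_zero]
    have hmemv : B.mulVec v = 0 := by rw [hv, Matrix.mulVec_smul, hbB, smul_zero]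
    have hunitu : star u ⬝ᵥ u = 1 := by
      rw [hu, star_smul, smul_dotProduct, dotProduct_smul, hdota]
      simp only [smul_eq_mul, star_inv₀, Complex.star_def, Complex.conj_ofReal]
      push_cast
      field_simp
    have hunitv : star v ⬝ᵥ v = 1 := by
      rw [hv, star_smul, smul_dotProduct, dotProduct_smul, hdotb]
      simp only [smul_eq_mul, star_inv₀, Complex.star_def, Complex.conj_ofReal]
      push_cast
      field_simp
    have hle : ‖star u ⬝ᵥ v‖ ≤ Real.cos θ :=
      hcos.2 ⟨u, v, hmemu, hmemv, hunitu, hunitv, rfl⟩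
    have hdab : star ((WithLp.equiv 2 (Fin n → ℂ)) a) ⬝ᵥ ((WithLp.equiv 2 (Fin n → ℂ)) b)
        = inner (𝕜 := ℂ) a b := by
      rw [← inner_piLp_equiv_symm']
      simp
    have hsuv : star u ⬝ᵥ v = ((p⁻¹ : ℂ)) * ((q⁻¹ : ℂ)) * inner (𝕜 := ℂ) a b := by
      rw [hu, hv, star_smul, smul_dotProduct, dotProduct_smul, hdab]
      simp only [smul_eq_mul, star_inv₀, Complex.star_def, Complex.conj_ofReal]
      push_cast
      ring
    have habs : ‖star u ⬝ᵥ v‖ = p⁻¹ * q⁻¹ * ‖inner (𝕜 := ℂ) a b‖ := by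
      rw [hsuv]
      simp only [norm_mul, norm_inv, Complex.norm_real, Real.norm_eq_abs]
      rw [abs_of_pos hppos, abs_of_pos hqpos]
    rw [habs] at hle
    calc ‖inner (𝕜 := ℂ) a b‖ = (p * q) * (p⁻¹ * q⁻¹ * ‖inner (𝕜 := ℂ) a b‖) := by
          field_simp
      _ ≤ (p * q) * Real.cos θ := by
          apply mul_le_mul_of_nonneg_left hle (by positivity)
      _ = Real.cos θ * (p * q) := by ring
  -- s ≤ (1 + cos θ) ν
  have hs : p ^ 2 + q ^ 2 ≤ (1 + Real.cos θ) * ν := by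
    have h4 : p ^ 2 + q ^ 2 ≤ ‖w‖ * ‖a + b‖ := by
      have he : p ^ 2 + q ^ 2 = (inner (𝕜 := ℂ) w (a + b)).re := by
        rw [inner_add_right, Complex.add_re, hwa, hwb]
      rw [he]
      exact (Complex.re_le_norm _).trans
        (by exact norm_inner_le_norm w (a + b))
    have h5 : ‖a + b‖ ^ 2 ≤ (1 + Real.cos θ) * (p ^ 2 + q ^ 2) := by
      rw [norm_add_sq (𝕜 := ℂ)]
      simp only [RCLike.re_to_complex]
      have h5a : (inner (𝕜 := ℂ) a b).re ≤ Real.cos θ * (p * q) :=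
        (Complex.re_le_norm _).trans (by exact hab)
      have h5b : Real.cos θ * (2 * p * q) ≤ Real.cos θ * (p ^ 2 + q ^ 2) :=
        mul_le_mul_of_nonneg_left (two_mul_le_add_sq p q) hc0
      rw [← hp, ← hq]
      nlinarith
    have hsnn : 0 ≤ p ^ 2 + q ^ 2 := by positivity
    rcases hsnn.eq_or_lt with h0 | h0
    · rw [← h0]
      positivity
    · have hsq : (p ^ 2 + q ^ 2) * (p ^ 2 + q ^ 2) ≤ (‖w‖ * ‖a + b‖) * (‖w‖ * ‖a + b‖) :=
        mul_self_le_mul_self hsnn h4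
      have hw2 : ‖w‖ * ‖a + b‖ * (‖w‖ * ‖a + b‖) = ν * ‖a + b‖ ^ 2 := by
        rw [hν]; ring
      rw [hw2] at hsq
      have h6 : ν * ‖a + b‖ ^ 2 ≤ ν * ((1 + Real.cos θ) * (p ^ 2 + q ^ 2)) :=
        mul_le_mul_of_nonneg_left h5 hν0.le
      have h7 := hsq.trans h6
      exact le_of_mul_le_mul_right (by linarith : (p ^ 2 + q ^ 2) * (p ^ 2 + q ^ 2)
          ≤ ((1 + Real.cos θ) * ν) * (p ^ 2 + q ^ 2)) h0
  -- half-angle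
  have hsin : Real.sin (θ / 2) ^ 2 = 1 / 2 - Real.cos θ / 2 := by
    have := Real.sin_sq_eq_half_sub (θ / 2)
    rwa [show 2 * (θ / 2) = θ by ring] at this
  have hmA := eig_pos hA hlamA
  have hmB := eig_pos hB hlamB
  have hfin : (min lamA lamB * Real.sin (θ / 2) ^ 2) * ν ≤ μ * ν := by
    have h6 : min lamA lamB ≤ lamA := min_le_left _ _
    have h7 : min lamA lamB ≤ lamB := min_le_right _ _
    have h8 : 0 < min lamA lamB := lt_min hmA hmB
    have hA1 : min lamA lamB * ‖w - a‖ ^ 2 ≤ lamA * ‖w - a‖ ^ 2 :=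
      mul_le_mul_of_nonneg_right h6 (sq_nonneg _)
    have hB1 : min lamA lamB * ‖w - b‖ ^ 2 ≤ lamB * ‖w - b‖ ^ 2 :=
      mul_le_mul_of_nonneg_right h7 (sq_nonneg _)
    have hstep : min lamA lamB * (‖w - a‖ ^ 2 + ‖w - b‖ ^ 2) ≤ μ * ν := by
      rw [mul_add]; linarith
    have hxy : (1 - Real.cos θ) * ν ≤ ‖w - a‖ ^ 2 + ‖w - b‖ ^ 2 := by linarith
    have hchain : min lamA lamB * ((1 - Real.cos θ) * ν) ≤ μ * ν :=
      le_trans (mul_le_mul_of_nonneg_left hxy h8.le) hstep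
    have h9 : 0 ≤ min lamA lamB * ((1 - Real.cos θ) * ν) :=
      mul_nonneg h8.le (mul_nonneg (by linarith [Real.cos_le_one θ]) hν0.le)
    rw [hsin]
    linarith
  exact le_of_mul_le_mul_right hfin hν0
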